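/- arXiv:2604.22567 — 2 statements merged into one kernel-verified Lean document; each statement's English description precedes it below -/
import Mathlib

section
/- Let ξ: [0,∞) → (-1,1) be continuous. Then there exists a sequence (A_j) of finite unions of disjoint measurable sets in ℝ² (each contained in a grid of boxes of side 1/R_j with R_j → ∞) such that for every ball B_r(x) ⊆ ℝ², |A_j ∩ B_r(x)| → ∫_{B_r(x)} (1 + ξ(‖y‖))/2 dy as j → ∞. -/
open MeasureTheory Metric Filter

namespace Stmt15

noncomputable section

local notation "E2" => EuclideanSpace ℝ (Fin 2)

def N (j : ℕ) : ℝ := j + 1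

lemma N_pos (j : ℕ) : 0 < N j := by
  have : (0:ℝ) ≤ j := Nat.cast_nonneg j
  simp only [N]; linarith

lemma N_mono {j j' : ℕ} (h : j ≤ j') : N j ≤ N j' := by
  simp only [N]
  have : (j:ℝ) ≤ j' := Nat.cast_le.mpr h
  linarith

lemma tendsto_two_div_N : Tendsto (fun j => 2 / N j) atTop (nhds 0) := by
  have h := tendsto_one_div_add_atTop_nhds_zero_nat (𝕜 := ℝ)
  have heq : (fun j : ℕ => 2 / N j) = fun j : ℕ => 2 * (1 / ((j:ℝ) + 1)) := by
    funext j; simp [N]; ring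
  rw [heq]
  simpa using h.const_mul 2

/-- A half-open grid box with horizontal extent `c/N j`. -/
def box (j : ℕ) (p : ℤ × ℤ) (c : ℝ) : Set E2 :=
  {y | y 0 ∈ Set.Ico ((p.1 : ℝ) / N j) (((p.1 : ℝ) + c) / N j) ∧
       y 1 ∈ Set.Ico ((p.2 : ℝ) / N j) (((p.2 : ℝ) + 1) / N j)}

def Q (j : ℕ) (p : ℤ × ℤ) : Set E2 := box j p 1

lemma measurable_coord (i : Fin 2) : Measurable (fun y : E2 => y i) :=
  (EuclideanSpace.proj (𝕜 := ℝ) i).continuous.measurable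

lemma measurableSet_box (j : ℕ) (p : ℤ × ℤ) (c : ℝ) : MeasurableSet (box j p c) := by
  have h0 : MeasurableSet {y : E2 | y 0 ∈ Set.Ico ((p.1 : ℝ) / N j) (((p.1 : ℝ) + c) / N j)} :=
    (measurable_coord 0) measurableSet_Ico
  have h1 : MeasurableSet {y : E2 | y 1 ∈ Set.Ico ((p.2 : ℝ) / N j) (((p.2 : ℝ) + 1) / N j)} :=
    (measurable_coord 1) measurableSet_Ico
  exact h0.inter h1

lemma measurableSet_Q (j : ℕ) (p : ℤ × ℤ) : MeasurableSet (Q j p) := measurableSet_box _ _ _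

lemma volume_rect (a b c d : ℝ) :
    volume ({y : E2 | y 0 ∈ Set.Ico a b ∧ y 1 ∈ Set.Ico c d})
      = ENNReal.ofReal (b - a) * ENNReal.ofReal (d - c) := by
  have h : {y : E2 | y 0 ∈ Set.Ico a b ∧ y 1 ∈ Set.Ico c d}
      = ((MeasurableEquiv.toLp 2 (Fin 2 → ℝ)).symm) ⁻¹'
        (Set.univ.pi fun i => if i = 0 then Set.Ico a b else Set.Ico c d) := by
    ext y
    simp [Set.mem_pi, Fin.forall_fin_two]
  rw [h, MeasurePreserving.measure_preimage (EuclideanSpace.volume_preserving_symm_measurableEquiv_toLp (Fin 2))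
      (MeasurableSet.univ_pi fun i => by split <;> exact measurableSet_Ico).nullMeasurableSet,
    volume_pi_pi]
  rw [Fin.prod_univ_two]
  simp [Real.volume_Ico]

lemma volume_box (j : ℕ) (p : ℤ × ℤ) (c : ℝ) :
    volume (box j p c) = ENNReal.ofReal (c / N j) * ENNReal.ofReal (1 / N j) := by
  rw [box, volume_rect]
  congr 1 <;> rw [div_sub_div_same] <;> norm_num

lemma volume_box_ne_top (j : ℕ) (p : ℤ × ℤ) (c : ℝ) : volume (box j p c) ≠ ⊤ := by
  rw [volume_box]
  exact ENNReal.mul_ne_top ENNReal.ofReal_ne_top ENNReal.ofReal_ne_top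

lemma mem_Ico_div_iff (j : ℕ) (k : ℤ) (t : ℝ) :
    t ∈ Set.Ico ((k : ℝ) / N j) (((k : ℝ) + 1) / N j) ↔ ⌊N j * t⌋ = k := by
  have hN := N_pos j
  rw [Set.mem_Ico, Int.floor_eq_iff, div_le_iff₀ hN, lt_div_iff₀ hN, mul_comm t (N j)]

lemma mem_Q_iff (j : ℕ) (p : ℤ × ℤ) (y : E2) :
    y ∈ Q j p ↔ ⌊N j * y 0⌋ = p.1 ∧ ⌊N j * y 1⌋ = p.2 := by
  simp only [Q, box, Set.mem_setOf_eq, mem_Ico_div_iff]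

lemma iUnion_Q (j : ℕ) : ⋃ p : ℤ × ℤ, Q j p = Set.univ := by
  ext y
  simp only [Set.mem_iUnion, Set.mem_univ, iff_true]
  exact ⟨(⌊N j * y 0⌋, ⌊N j * y 1⌋), (mem_Q_iff j _ y).mpr ⟨rfl, rfl⟩⟩

lemma pairwise_disjoint_Q (j : ℕ) : Pairwise (Function.onFun Disjoint (Q j)) := by
  intro p q hpq
  refine Set.disjoint_left.mpr (fun y hyp hyq => hpq ?_)
  rw [mem_Q_iff] at hyp hyq
  exact Prod.ext (hyp.1 ▸ hyq.1) (hyp.2 ▸ hyq.2)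

lemma measure_partition (j : ℕ) (S : Set E2) (hS : MeasurableSet S) :
    volume S = ∑' p : ℤ × ℤ, volume (S ∩ Q j p) := by
  conv_lhs => rw [← Set.inter_univ S, ← iUnion_Q j, Set.inter_iUnion]
  exact measure_iUnion
    ((pairwise_disjoint_Q j).mono fun p q h =>
      h.mono Set.inter_subset_right Set.inter_subset_right)
    (fun p => hS.inter (measurableSet_Q j p))

lemma Q_diam {j : ℕ} {p : ℤ × ℤ} {z w : E2} (hz : z ∈ Q j p) (hw : w ∈ Q j p) :
    dist z w ≤ 2 / N j := by
  have hN := N_pos j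
  have key : ∀ (a : ℝ) (s t : ℝ), s ∈ Set.Ico (a / N j) ((a + 1) / N j) →
      t ∈ Set.Ico (a / N j) ((a + 1) / N j) → |s - t| ≤ 1 / N j := by
    intro a s t hs ht
    have h1 : (a + 1) / N j - a / N j = 1 / N j := by
      rw [div_sub_div_same]; norm_num
    rw [abs_sub_le_iff]
    constructor <;> [skip; skip] <;>
      · have := hs.1; have := hs.2; have := ht.1; have := ht.2; linarith
  have h0 : |z 0 - w 0| ≤ 1 / N j := key _ _ _ hz.1 hw.1
  have h1 : |z 1 - w 1| ≤ 1 / N j := key _ _ _ hz.2 hw.2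
  have hd : dist z w = Real.sqrt (dist (z 0) (w 0) ^ 2 + dist (z 1) (w 1) ^ 2) := by
    rw [EuclideanSpace.dist_eq, Fin.sum_univ_two]
  rw [hd, Real.dist_eq, Real.dist_eq]
  have h2 : |z 0 - w 0| ^ 2 + |z 1 - w 1| ^ 2 ≤ (2 / N j) ^ 2 := by
    have a0 : |z 0 - w 0| ^ 2 ≤ (1 / N j) ^ 2 := pow_le_pow_left₀ (abs_nonneg _) h0 2
    have a1 : |z 1 - w 1| ^ 2 ≤ (1 / N j) ^ 2 := pow_le_pow_left₀ (abs_nonneg _) h1 2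
    have h4 : (2 / N j) ^ 2 = 4 * (1 / N j) ^ 2 := by ring
    have hq : (0:ℝ) ≤ (1 / N j) ^ 2 := by positivity
    linarith
  calc Real.sqrt (|z 0 - w 0| ^ 2 + |z 1 - w 1| ^ 2) ≤ Real.sqrt ((2 / N j) ^ 2) :=
        Real.sqrt_le_sqrt h2
    _ = 2 / N j := Real.sqrt_sq (by positivity)

section F

variable (f : E2 → ℝ)

/-- lower-left grid point. -/
def gp (j : ℕ) (p : ℤ × ℤ) : E2 :=
  WithLp.toLp 2 (fun i => if i = 0 then (p.1 : ℝ) / N j else (p.2 : ℝ) / N j : Fin 2 → ℝ)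

lemma gp_zero (j : ℕ) (p : ℤ × ℤ) : gp j p 0 = (p.1 : ℝ) / N j := rfl

lemma gp_one (j : ℕ) (p : ℤ × ℤ) : gp j p 1 = (p.2 : ℝ) / N j := rfl

lemma gp_mem_Q (j : ℕ) (p : ℤ × ℤ) : gp j p ∈ Q j p := by
  have hN := (N_pos j).ne'
  rw [mem_Q_iff, gp_zero, gp_one]
  constructor <;> · rw [mul_div_cancel₀ _ hN]; exact Int.floor_intCast _

def Rbox (j : ℕ) (p : ℤ × ℤ) : Set E2 := box j p (f (gp j p))

def A (j : ℕ) : Set E2 := ⋃ p : ℤ × ℤ, Rbox f j p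

lemma measurableSet_A (j : ℕ) : MeasurableSet (A f j) :=
  MeasurableSet.iUnion fun _ => measurableSet_box _ _ _

lemma Rbox_subset_Q (hf1 : ∀ y, f y ≤ 1) (j : ℕ) (p : ℤ × ℤ) : Rbox f j p ⊆ Q j p := by
  intro y hy
  refine ⟨⟨hy.1.1, lt_of_lt_of_le hy.1.2 ?_⟩, hy.2⟩
  exact (div_le_div_iff_of_pos_right (N_pos j)).mpr (by linarith [hf1 (gp j p)])

lemma A_inter_Q (hf1 : ∀ y, f y ≤ 1) (j : ℕ) (p : ℤ × ℤ) : A f j ∩ Q j p = Rbox f j p := by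
  apply Set.Subset.antisymm
  · rintro y ⟨hyA, hyQ⟩
    obtain ⟨q, hq⟩ := Set.mem_iUnion.mp hyA
    have hyQq : y ∈ Q j q := Rbox_subset_Q f hf1 j q hq
    have : q = p := by
      rw [mem_Q_iff] at hyQ hyQq
      exact Prod.ext (hyQq.1 ▸ hyQ.1) (hyQq.2 ▸ hyQ.2)
    exact this ▸ hq
  · exact Set.subset_inter (Set.subset_iUnion (Rbox f j) p) (Rbox_subset_Q f hf1 j p)

def snap (j : ℕ) (y : E2) : E2 := gp j (⌊N j * y 0⌋, ⌊N j * y 1⌋)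

lemma snap_eq {j : ℕ} {p : ℤ × ℤ} {y : E2} (hy : y ∈ Q j p) : snap j y = gp j p := by
  rw [mem_Q_iff] at hy
  rw [snap, hy.1, hy.2]

lemma self_mem_Q (j : ℕ) (y : E2) : y ∈ Q j (⌊N j * y 0⌋, ⌊N j * y 1⌋) :=
  (mem_Q_iff j _ y).mpr ⟨rfl, rfl⟩

lemma measurable_snap (j : ℕ) : Measurable (snap j) := by
  have heq : snap j = ((MeasurableEquiv.toLp 2 (Fin 2 → ℝ)).symm).symm ∘
      (fun y : E2 => fun i : Fin 2 =>
        if i = 0 then ((⌊N j * y 0⌋ : ℤ) : ℝ) / N j else ((⌊N j * y 1⌋ : ℤ) : ℝ) / N j) := rfl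
  rw [heq]
  refine (((MeasurableEquiv.toLp 2 (Fin 2 → ℝ)).symm).symm.measurable).comp
    (measurable_pi_lambda _ fun i => ?_)
  by_cases hi : i = 0 <;> simp only [hi, if_true, if_false] <;>
    exact (measurable_from_top.comp (((measurable_coord _).const_mul (N j)).floor)).div_const _
  
lemma snap_mem_Q' (j : ℕ) (y : E2) : snap j y ∈ Q j (⌊N j * y 0⌋, ⌊N j * y 1⌋) :=
  gp_mem_Q j _

def Ann (j : ℕ) (x : E2) (r : ℝ) : Set E2 :=
  closedBall x (r + 2 / N j) \ ball x (r - 2 / N j)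

lemma measurableSet_Ann (j : ℕ) (x : E2) (r : ℝ) : MeasurableSet (Ann j x r) :=
  measurableSet_closedBall.diff measurableSet_ball

lemma volume_Ann_ne_top (j : ℕ) (x : E2) (r : ℝ) : volume (Ann j x r) ≠ ⊤ :=
  ne_top_of_le_ne_top measure_closedBall_lt_top.ne (measure_mono Set.diff_subset)

lemma tendsto_volume_Ann (x : E2) (r : ℝ) :
    Tendsto (fun j => (volume (Ann j x r)).toReal) atTop (nhds 0) := by
  have hanti : Antitone (fun j => Ann j x r) := by
    intro j j' hjj'
    have hdle : 2 / N j' ≤ 2 / N j :=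
      div_le_div_of_nonneg_left (by norm_num) (N_pos j) (N_mono hjj')
    exact Set.diff_subset_diff (closedBall_subset_closedBall (by linarith))
      (ball_subset_ball (by linarith))
  have h1 : Tendsto (fun j => volume (Ann j x r)) atTop
      (nhds (volume (⋂ j, Ann j x r))) :=
    tendsto_measure_iInter_atTop
      (fun j => (measurableSet_Ann j x r).nullMeasurableSet) hanti
      ⟨0, volume_Ann_ne_top 0 x r⟩
  have hT : Tendsto (fun j => r + 2 / N j) atTop (nhds r) := by
    simpa using tendsto_const_nhds.add tendsto_two_div_N
  have hT' : Tendsto (fun j => r - 2 / N j) atTop (nhds r) := by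
    simpa using tendsto_const_nhds.sub tendsto_two_div_N
  have h2 : (⋂ j, Ann j x r) = sphere x r := by
    ext z
    simp only [Set.mem_iInter, Ann, Set.mem_diff, mem_closedBall, mem_ball, not_lt,
      mem_sphere]
    constructor
    · intro h
      have hle : dist z x ≤ r := ge_of_tendsto hT (Filter.Eventually.of_forall fun j => (h j).1)
      have hge : r ≤ dist z x := le_of_tendsto hT' (Filter.Eventually.of_forall fun j => (h j).2)
      linarith
    · intro h j
      have : 0 < 2 / N j := div_pos two_pos (N_pos j)
      exact ⟨by linarith, by linarith⟩
  rw [h2, Measure.addHaar_sphere] at h1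
  have := (ENNReal.tendsto_toReal (a := 0) (by simp)).comp h1
  simpa [Function.comp_def] using this

section F2

variable (f : E2 → ℝ)

lemma integrableOn_snap (hf : Continuous f) (hf0 : ∀ y, 0 ≤ f y) (hf1 : ∀ y, f y ≤ 1)
    (j : ℕ) (x : E2) (r : ℝ) :
    IntegrableOn (fun y => f (snap j y)) (ball x r) volume := by
  haveI : IsFiniteMeasure (volume.restrict (ball x r)) :=
    ⟨by rw [Measure.restrict_apply_univ]; exact measure_ball_lt_top⟩
  refine (integrable_const (1:ℝ)).mono' ?_ ?_
  · exact (hf.measurable.comp (measurable_snap j)).aestronglyMeasurable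
  · refine Filter.Eventually.of_forall fun y => ?_
    rw [Real.norm_eq_abs, abs_le]
    exact ⟨by linarith [hf0 (snap j y)], hf1 (snap j y)⟩

lemma integral_snap_eq (hf : Continuous f) (hf0 : ∀ y, 0 ≤ f y) (hf1 : ∀ y, f y ≤ 1)
    (j : ℕ) (x : E2) (r : ℝ) :
    ∫ y in ball x r, f (snap j y)
      = ∑' p : ℤ × ℤ, f (gp j p) * (volume (ball x r ∩ Q j p)).toReal := by
  have hU : (⋃ p : ℤ × ℤ, (ball x r ∩ Q j p)) = ball x r := by
    rw [← Set.inter_iUnion, iUnion_Q, Set.inter_univ]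
  have hInt : IntegrableOn (fun y => f (snap j y)) (⋃ p : ℤ × ℤ, (ball x r ∩ Q j p)) volume := by
    rw [hU]; exact integrableOn_snap f hf hf0 hf1 j x r
  calc ∫ y in ball x r, f (snap j y)
      = ∫ y in ⋃ p : ℤ × ℤ, (ball x r ∩ Q j p), f (snap j y) := by rw [hU]
    _ = ∑' p : ℤ × ℤ, ∫ y in ball x r ∩ Q j p, f (snap j y) :=
        integral_iUnion (fun p => measurableSet_ball.inter (measurableSet_Q j p))
          ((pairwise_disjoint_Q j).mono fun p q h =>
            h.mono Set.inter_subset_right Set.inter_subset_right) hInt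
    _ = ∑' p : ℤ × ℤ, f (gp j p) * (volume (ball x r ∩ Q j p)).toReal := by
        refine tsum_congr fun p => ?_
        rw [setIntegral_congr_fun (measurableSet_ball.inter (measurableSet_Q j p))
          (g := fun _ => f (gp j p)) (fun y hy => by rw [snap_eq hy.2]),
          setIntegral_const, smul_eq_mul, mul_comm, measureReal_def]

set_option maxHeartbeats 1000000 in
lemma key_estimate (hf : Continuous f) (hf0 : ∀ y, 0 ≤ f y) (hf1 : ∀ y, f y ≤ 1)
    (j : ℕ) (x : E2) (r : ℝ) :
    |(volume (A f j ∩ ball x r)).toReal - ∫ y in ball x r, f (snap j y)|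
      ≤ (volume (Ann j x r)).toReal := by
  set B := ball x r with hB
  set a : ℤ × ℤ → ℝ := fun p => (volume (Rbox f j p ∩ B)).toReal with ha_def
  set b : ℤ × ℤ → ℝ := fun p => f (gp j p) * (volume (B ∩ Q j p)).toReal with hb_def
  set g : ℤ × ℤ → ℝ := fun p => (volume (Ann j x r ∩ Q j p)).toReal with hg_def
  have hQfin : ∀ p : ℤ × ℤ, volume (Q j p) ≠ ⊤ := fun p => volume_box_ne_top j p 1
  -- per-term bound
  have hab : ∀ p : ℤ × ℤ, |a p - b p| ≤ g p := by
    intro p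
    by_cases hsub : Q j p ⊆ B
    · have hRB : Rbox f j p ∩ B = Rbox f j p :=
        Set.inter_eq_left.mpr ((Rbox_subset_Q f hf1 j p).trans hsub)
      have hBQ : B ∩ Q j p = Q j p := Set.inter_eq_right.mpr hsub
      have haa : a p = (f (gp j p) / N j) * (1 / N j) := by
        rw [ha_def]
        simp only
        rw [hRB, Rbox, volume_box, ENNReal.toReal_mul,
          ENNReal.toReal_ofReal (one_div_nonneg.mpr (N_pos j).le),
          ENNReal.toReal_ofReal (div_nonneg (hf0 _) (N_pos j).le)]
      have hbb : b p = f (gp j p) * ((1 / N j) * (1 / N j)) := by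
        rw [hb_def]
        simp only
        rw [hBQ, Q, volume_box, ENNReal.toReal_mul,
          ENNReal.toReal_ofReal (one_div_nonneg.mpr (N_pos j).le)]
      have : a p - b p = 0 := by rw [haa, hbb]; ring
      rw [this, abs_zero]
      exact ENNReal.toReal_nonneg
    by_cases hdisj : B ∩ Q j p = ∅
    · have haz : a p = 0 := by
        have : Rbox f j p ∩ B ⊆ B ∩ Q j p := fun y hy =>
          ⟨hy.2, Rbox_subset_Q f hf1 j p hy.1⟩
        rw [ha_def]; simp only
        rw [measure_mono_null this (by simp [hdisj])]
        simp
      have hbz : b p = 0 := by rw [hb_def]; simp only [hdisj]; simp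
      rw [haz, hbz, sub_zero, abs_zero]
      exact ENNReal.toReal_nonneg
    · obtain ⟨v, hv⟩ := Set.nonempty_iff_ne_empty.mpr hdisj
      obtain ⟨u, huQ, huB⟩ := Set.not_subset.mp hsub
      have hQA : Q j p ⊆ Ann j x r := by
        intro z hz
        have hzv : dist z v ≤ 2 / N j := Q_diam hz hv.2
        have hzu : dist u z ≤ 2 / N j := Q_diam huQ hz
        have hvx : dist v x < r := mem_ball.mp hv.1
        have hux : r ≤ dist u x := le_of_not_gt (fun h => huB (mem_ball.mpr h))
        constructor
        · rw [mem_closedBall]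
          calc dist z x ≤ dist z v + dist v x := dist_triangle z v x
            _ ≤ r + 2 / N j := by linarith
        · rw [mem_ball, not_lt]
          have := dist_triangle u z x
          have : dist u x - dist u z ≤ dist z x := by linarith
          linarith
      have hg : g p = (volume (Q j p)).toReal := by
        rw [hg_def]; simp only
        rw [Set.inter_eq_right.mpr hQA]
      have haub : a p ≤ (volume (Q j p)).toReal := by
        rw [ha_def]; simp only
        exact ENNReal.toReal_mono (hQfin p)
          (measure_mono fun y hy => Rbox_subset_Q f hf1 j p hy.1)
      have hbub : b p ≤ (volume (Q j p)).toReal := by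
        rw [hb_def]; simp only
        calc f (gp j p) * (volume (B ∩ Q j p)).toReal
            ≤ 1 * (volume (Q j p)).toReal :=
              mul_le_mul (hf1 _)
                (ENNReal.toReal_mono (hQfin p) (measure_mono Set.inter_subset_right))
                ENNReal.toReal_nonneg zero_le_one
          _ = (volume (Q j p)).toReal := one_mul _
      have han : 0 ≤ a p := ENNReal.toReal_nonneg
      have hbn : 0 ≤ b p := mul_nonneg (hf0 _) ENNReal.toReal_nonneg
      rw [abs_sub_le_iff]
      exact ⟨by linarith, by linarith⟩
  -- sums
  have hvolA : volume (A f j ∩ B) = ∑' p : ℤ × ℤ, volume (Rbox f j p ∩ B) := by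
    rw [measure_partition j _ ((measurableSet_A f j).inter measurableSet_ball)]
    exact tsum_congr fun p => by
      rw [Set.inter_right_comm, A_inter_Q f hf1 j p]
  have hXa : (volume (A f j ∩ B)).toReal = ∑' p, a p := by
    rw [hvolA, ENNReal.tsum_toReal_eq fun p =>
      ne_top_of_le_ne_top (hQfin p)
        (measure_mono fun y hy => Rbox_subset_Q f hf1 j p hy.1)]
  have hYb : ∫ y in B, f (snap j y) = ∑' p, b p :=
    integral_snap_eq f hf hf0 hf1 j x r
  have hsa : Summable a := by
    apply ENNReal.summable_toReal
    rw [← hvolA]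
    exact ne_top_of_le_ne_top measure_ball_lt_top.ne (measure_mono Set.inter_subset_right)
  have hsQB : Summable (fun p : ℤ × ℤ => (volume (B ∩ Q j p)).toReal) := by
    apply ENNReal.summable_toReal
    rw [← measure_partition j B measurableSet_ball]
    exact measure_ball_lt_top.ne
  have hsb : Summable b := by
    refine Summable.of_nonneg_of_le (fun p => mul_nonneg (hf0 _) ENNReal.toReal_nonneg)
      (fun p => ?_) hsQB
    exact mul_le_of_le_one_left ENNReal.toReal_nonneg (hf1 _)
  have hsg : Summable g := by
    apply ENNReal.summable_toReal
    rw [← measure_partition j (Ann j x r) (measurableSet_Ann j x r)]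
    exact volume_Ann_ne_top j x r
  have hsab : Summable (fun p => |a p - b p|) :=
    Summable.of_nonneg_of_le (fun p => abs_nonneg _) hab hsg
  have hgsum : ∑' p, g p = (volume (Ann j x r)).toReal := by
    rw [hg_def]
    rw [← ENNReal.tsum_toReal_eq fun p =>
      ne_top_of_le_ne_top (volume_Ann_ne_top j x r) (measure_mono Set.inter_subset_left),
      ← measure_partition j (Ann j x r) (measurableSet_Ann j x r)]
  rw [hXa, hYb, ← Summable.tsum_sub hsa hsb]
  calc |∑' p, (a p - b p)| ≤ ∑' p, |a p - b p| := by
        have h := norm_tsum_le_tsum_norm (f := fun p => a p - b p) (by simpa using hsab)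
        simpa using h
    _ ≤ ∑' p, g p := Summable.tsum_le_tsum hab hsab hsg
    _ = (volume (Ann j x r)).toReal := hgsum

lemma tendsto_integral_snap (hf : Continuous f) (hf0 : ∀ y, 0 ≤ f y) (hf1 : ∀ y, f y ≤ 1)
    (x : E2) (r : ℝ) :
    Tendsto (fun j => ∫ y in ball x r, f (snap j y)) atTop
      (nhds (∫ y in ball x r, f y)) := by
  haveI : IsFiniteMeasure (volume.restrict (ball x r)) :=
    ⟨by rw [Measure.restrict_apply_univ]; exact measure_ball_lt_top⟩
  apply tendsto_integral_of_dominated_convergence (fun _ => (1:ℝ))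
  · exact fun j => (hf.measurable.comp (measurable_snap j)).aestronglyMeasurable
  · exact integrable_const 1
  · intro j
    refine Filter.Eventually.of_forall fun y => ?_
    rw [Real.norm_eq_abs, abs_le]
    exact ⟨by linarith [hf0 (snap j y)], hf1 (snap j y)⟩
  · refine Filter.Eventually.of_forall fun y => ?_
    apply (hf.tendsto y).comp
    rw [tendsto_iff_dist_tendsto_zero]
    refine squeeze_zero (fun j => dist_nonneg) (fun j => ?_) tendsto_two_div_N
    exact Q_diam (snap_mem_Q' j y) (self_mem_Q j y)

lemma main_tendsto (hf : Continuous f) (hf0 : ∀ y, 0 ≤ f y) (hf1 : ∀ y, f y ≤ 1)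
    (x : E2) (r : ℝ) :
    Tendsto (fun j => (volume (A f j ∩ ball x r)).toReal) atTop
      (nhds (∫ y in ball x r, f y)) := by
  have h1 := tendsto_integral_snap f hf hf0 hf1 x r
  have h2 := tendsto_volume_Ann x r
  rw [tendsto_iff_dist_tendsto_zero]
  have h1' := tendsto_iff_dist_tendsto_zero.mp h1
  refine squeeze_zero (fun j => dist_nonneg) (fun j => ?_) (by simpa using h2.add h1')
  calc dist (volume (A f j ∩ ball x r)).toReal (∫ y in ball x r, f y)
      ≤ dist (volume (A f j ∩ ball x r)).toReal (∫ y in ball x r, f (snap j y))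
        + dist (∫ y in ball x r, f (snap j y)) (∫ y in ball x r, f y) := dist_triangle _ _ _
    _ ≤ (volume (Ann j x r)).toReal
        + dist (∫ y in ball x r, f (snap j y)) (∫ y in ball x r, f y) := by
        have := key_estimate f hf hf0 hf1 j x r
        rw [Real.dist_eq]
        linarith [this]

end F2

end F

end

end Stmt15

/-- For every continuous `ξ : [0,∞) → (-1,1)` there exists a sequence of measurable sets
`A_j ⊆ ℝ²` whose volumes on every ball converge to the integral of the density
`(1 + ξ(‖y‖))/2`. -/
theorem stmt15 (ξ : ℝ → ℝ) (hcont : ContinuousOn ξ (Set.Ici 0))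
    (hrange : ∀ ρ : ℝ, 0 ≤ ρ → ξ ρ ∈ Set.Ioo (-1 : ℝ) 1) :
    ∃ A : ℕ → Set (EuclideanSpace ℝ (Fin 2)),
      (∀ j, MeasurableSet (A j)) ∧
      ∀ (x : EuclideanSpace ℝ (Fin 2)) (r : ℝ), 0 < r →
        Filter.Tendsto (fun j => (volume (A j ∩ Metric.ball x r)).toReal) Filter.atTop
          (nhds (∫ y in Metric.ball x r, (1 + ξ ‖y‖) / 2)) := by
  set f : EuclideanSpace ℝ (Fin 2) → ℝ := fun y => (1 + ξ ‖y‖) / 2 with hfdef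
  have hξ : Continuous fun y : EuclideanSpace ℝ (Fin 2) => ξ ‖y‖ :=
    hcont.comp_continuous continuous_norm fun y => norm_nonneg y
  have hf : Continuous f := (continuous_const.add hξ).div_const 2
  have hf0 : ∀ y, 0 ≤ f y := fun y => by
    have := (hrange ‖y‖ (norm_nonneg y)).1
    simp only [hfdef]
    linarith
  have hf1 : ∀ y, f y ≤ 1 := fun y => by
    have := (hrange ‖y‖ (norm_nonneg y)).2
    simp only [hfdef]
    linarith
  exact ⟨Stmt15.A f, fun j => Stmt15.measurableSet_A f j,
    fun x r _hr => Stmt15.main_tendsto f hf hf0 hf1 x r⟩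
end

section
/- Define p(a) = cos(‖a‖ + γ) on ℝ^d for a fixed phase γ ∈ ℝ. Then for every u ∈ (-1,1), as R → ∞, (1/|B_R(0)|)·∫_{B_R(0)} sgn(p(a) - u) da → 2·arccos(u)/π - 1, uniformly in u on compact subsets of (-1,1). In particular, the limit is 0 when u = 0. -/
open MeasureTheory Real Set intervalIntegral

noncomputable def chi (γ u r : ℝ) : ℝ := if 0 ≤ Real.cos (r + γ) - u then 1 else 0

lemma chi_nonneg (γ u r : ℝ) : 0 ≤ chi γ u r := by unfold chi; split <;> norm_num

lemma chi_le_one (γ u r : ℝ) : chi γ u r ≤ 1 := by unfold chi; split <;> norm_num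

lemma measurable_chi (γ u : ℝ) : Measurable (chi γ u) := by
  unfold chi
  exact Measurable.ite (measurableSet_le measurable_const (by fun_prop)) measurable_const
    measurable_const

lemma intervalIntegrable_chi (γ u a b : ℝ) : IntervalIntegrable (chi γ u) volume a b := by
  refine IntervalIntegrable.mono_fun (_root_.intervalIntegrable_const (c := (1:ℝ)))
    ((measurable_chi γ u).aestronglyMeasurable) ?_
  filter_upwards with r
  rw [Real.norm_eq_abs, Real.norm_eq_abs, abs_of_nonneg (chi_nonneg γ u r), abs_one]
  exact chi_le_one γ u r

lemma intervalIntegrable_pow_chi (γ u a b : ℝ) (n : ℕ) :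
    IntervalIntegrable (fun r => r ^ n * chi γ u r) volume a b := by
  simp_rw [mul_comm]
  rw [intervalIntegrable_iff]
  refine Integrable.bdd_mul (intervalIntegrable_iff.mp (intervalIntegrable_pow n))
    (measurable_chi γ u).aestronglyMeasurable (c := 1) (Filter.Eventually.of_forall fun r => ?_)
  rw [Real.norm_eq_abs, abs_of_nonneg (chi_nonneg γ u r)]
  exact chi_le_one γ u r

lemma periodic_chi (γ u : ℝ) : Function.Periodic (chi γ u) (2 * π) := by
  intro r; unfold chi
  rw [show r + 2 * π + γ = r + γ + 2 * π by ring, Real.cos_add_two_pi]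

lemma integral_chi_period (γ : ℝ) {u : ℝ} (hu : u ∈ Set.Icc (-1:ℝ) 1) (t : ℝ) :
    ∫ r in t..t + 2 * π, chi γ u r = 2 * Real.arccos u := by
  rw [(periodic_chi γ u).intervalIntegral_add_eq t (-π - γ)]
  have hcv : ∫ r in (-π - γ)..(-π - γ) + 2 * π, chi γ u r
      = ∫ s in (-π)..π, chi γ u (s - γ) := by
    rw [intervalIntegral.integral_comp_sub_right (fun s => chi γ u s) γ]
    ring_nf
  rw [hcv]
  have hchi : ∀ s, chi γ u (s - γ) = chi 0 u s := by
    intro s; unfold chi; rw [sub_add_cancel, add_zero]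
  simp_rw [hchi]
  set α := Real.arccos u with hα
  have hα0 : 0 ≤ α := Real.arccos_nonneg u
  have hαπ : α ≤ π := Real.arccos_le_pi u
  have hcosα : Real.cos α = u := Real.cos_arccos hu.1 hu.2
  have key : ∀ s : ℝ, |s| ≤ π → ((0 ≤ Real.cos s - u) ↔ |s| ≤ α) := by
    intro s hs
    rw [sub_nonneg, ← Real.cos_abs, ← hcosα]
    constructor
    · intro h
      by_contra hc
      push_neg at hc
      have := Real.cos_lt_cos_of_nonneg_of_le_pi hα0 hs hc
      linarith
    · intro h
      exact Real.cos_le_cos_of_nonneg_of_le_pi (abs_nonneg s) hαπ h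
  have keyval : ∀ s : ℝ, chi 0 u s = if 0 ≤ Real.cos s - u then 1 else 0 := by
    intro s; unfold chi; rw [add_zero]
  have hfold : ∫ s in (-π)..(0:ℝ), chi 0 u s = ∫ s in (0:ℝ)..π, chi 0 u s := by
    have h := intervalIntegral.integral_comp_neg (a := (0:ℝ)) (b := π) (f := chi 0 u)
    simp only [neg_zero] at h
    rw [← h]
    apply intervalIntegral.integral_congr
    intro s _
    simp only [keyval, Real.cos_neg]
  have hsplit : ∫ s in (-π)..π, chi 0 u s = 2 * ∫ s in (0:ℝ)..π, chi 0 u s := by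
    rw [← intervalIntegral.integral_add_adjacent_intervals (b := (0:ℝ))
      (intervalIntegrable_chi 0 u _ _) (intervalIntegrable_chi 0 u _ _), hfold]
    ring
  rw [hsplit]
  have h1 : ∫ s in (0:ℝ)..α, chi 0 u s = α := by
    rw [intervalIntegral.integral_congr (g := fun _ => (1:ℝ))]
    · simp
    · intro s hs
      rw [Set.uIcc_of_le hα0] at hs
      have habs : |s| ≤ α := abs_le.2 ⟨by linarith [hs.1], hs.2⟩
      rw [keyval, if_pos ((key s (by rw [abs_of_nonneg hs.1]; linarith [hs.2])).2 habs)]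
  have h2 : ∫ s in α..π, chi 0 u s = 0 := by
    rw [intervalIntegral.integral_congr_ae (g := fun _ => (0:ℝ))]
    · simp
    · filter_upwards with s hs
      rw [Set.uIoc_of_le hαπ] at hs
      have : ¬ (0 ≤ Real.cos s - u) := by
        intro h
        have habs := (key s (by rw [abs_of_nonneg (le_trans hα0 hs.1.le)]; exact hs.2)).1 h
        rw [abs_of_nonneg (le_trans hα0 hs.1.le)] at habs
        linarith [hs.1]
      rw [keyval, if_neg this]
  rw [← intervalIntegral.integral_add_adjacent_intervals (a := (0:ℝ)) (b := α) (c := π)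
    (intervalIntegrable_chi 0 u _ _) (intervalIntegrable_chi 0 u _ _), h1, h2]
  ring

lemma abs_split (x y z w : ℝ) : |x + y - (z + w)| ≤ |x - z| + |y - w| := by
  have h := abs_add_le (x - z) (y - w)
  calc |x + y - (z + w)| = |(x - z) + (y - w)| := by congr 1; ring
    _ ≤ _ := h

lemma integral_pow_chi_bound (γ : ℝ) {u : ℝ} (hu : u ∈ Set.Icc (-1:ℝ) 1) {d : ℕ} (hd : 1 ≤ d)
    {R : ℝ} (hR : 0 ≤ R) :
    |(∫ r in (0:ℝ)..R, r ^ (d-1) * chi γ u r)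
      - (Real.arccos u / π) * ∫ r in (0:ℝ)..R, r ^ (d-1)| ≤ 4 * π * R ^ (d-1) := by
  have hπ : (0:ℝ) < π := Real.pi_pos
  set α := Real.arccos u with hα
  have hα0 : 0 ≤ α := Real.arccos_nonneg u
  have hαπ : α ≤ π := Real.arccos_le_pi u
  set c : ℝ := α / π with hc
  have hc0 : 0 ≤ c := div_nonneg hα0 hπ.le
  have hc1 : c ≤ 1 := (div_le_one hπ).2 hαπ
  -- per-period bound
  have step : ∀ a : ℝ, 0 ≤ a →
      |(∫ r in a..(a + 2*π), r ^ (d-1) * chi γ u r)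
        - c * ∫ r in a..(a + 2*π), r ^ (d-1)| ≤ 2*π*((a + 2*π)^(d-1) - a^(d-1)) := by
    intro a ha
    have hab : a ≤ a + 2*π := by linarith
    have hmono : a ^ (d-1) ≤ (a + 2*π) ^ (d-1) := pow_le_pow_left₀ ha (by linarith) _
    have hperiod : ∫ r in a..(a + 2*π), chi γ u r = 2 * α := integral_chi_period γ hu a
    -- bounds for the chi integral
    have h1lo : a ^ (d-1) * (2*α) ≤ ∫ r in a..(a + 2*π), r ^ (d-1) * chi γ u r := by
      calc a ^ (d-1) * (2*α) = ∫ r in a..(a + 2*π), a ^ (d-1) * chi γ u r := by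
            rw [intervalIntegral.integral_const_mul, hperiod]
        _ ≤ _ := by
            apply intervalIntegral.integral_mono_on hab
              (((intervalIntegrable_chi γ u _ _)).const_mul _)
              (intervalIntegrable_pow_chi γ u _ _ _)
            intro x hx
            exact mul_le_mul_of_nonneg_right (pow_le_pow_left₀ ha hx.1 _) (chi_nonneg γ u x)
    have h1hi : (∫ r in a..(a + 2*π), r ^ (d-1) * chi γ u r) ≤ (a + 2*π) ^ (d-1) * (2*α) := by
      calc (∫ r in a..(a + 2*π), r ^ (d-1) * chi γ u r)
          ≤ ∫ r in a..(a + 2*π), (a + 2*π) ^ (d-1) * chi γ u r := by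
            apply intervalIntegral.integral_mono_on hab
              (intervalIntegrable_pow_chi γ u _ _ _)
              (((intervalIntegrable_chi γ u _ _)).const_mul _)
            intro x hx
            exact mul_le_mul_of_nonneg_right
              (pow_le_pow_left₀ (le_trans ha hx.1) hx.2 _) (chi_nonneg γ u x)
        _ = (a + 2*π) ^ (d-1) * (2*α) := by
            rw [intervalIntegral.integral_const_mul, hperiod]
    -- bounds for the power integral
    have h2lo : a ^ (d-1) * (2*π) ≤ ∫ r in a..(a + 2*π), r ^ (d-1) := by
      calc a ^ (d-1) * (2*π) = ∫ _r in a..(a + 2*π), a ^ (d-1) := by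
            rw [intervalIntegral.integral_const, smul_eq_mul]; ring
        _ ≤ _ := by
            apply intervalIntegral.integral_mono_on hab (intervalIntegrable_const)
              (intervalIntegrable_pow _)
            intro x hx
            exact pow_le_pow_left₀ ha hx.1 _
    have h2hi : (∫ r in a..(a + 2*π), r ^ (d-1)) ≤ (a + 2*π) ^ (d-1) * (2*π) := by
      calc (∫ r in a..(a + 2*π), r ^ (d-1)) ≤ ∫ _r in a..(a + 2*π), (a + 2*π) ^ (d-1) := by
            apply intervalIntegral.integral_mono_on hab (intervalIntegrable_pow _)
              (intervalIntegrable_const)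
            intro x hx
            exact pow_le_pow_left₀ (le_trans ha hx.1) hx.2 _
        _ = (a + 2*π) ^ (d-1) * (2*π) := by rw [intervalIntegral.integral_const, smul_eq_mul]; ring
    have hcmul : c * (2*π) = 2*α := by field_simp [hc]; rw [hc, div_mul_cancel₀ _ hπ.ne']
    have hB1 : a ^ (d-1) * (2*α) ≤ c * ∫ r in a..(a + 2*π), r ^ (d-1) := by
      calc a ^ (d-1) * (2*α) = c * (a ^ (d-1) * (2*π)) := by rw [← hcmul]; ring
        _ ≤ _ := mul_le_mul_of_nonneg_left h2lo hc0
    have hB2 : c * (∫ r in a..(a + 2*π), r ^ (d-1)) ≤ (a + 2*π) ^ (d-1) * (2*α) := by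
      calc c * (∫ r in a..(a + 2*π), r ^ (d-1)) ≤ c * ((a + 2*π) ^ (d-1) * (2*π)) :=
            mul_le_mul_of_nonneg_left h2hi hc0
        _ = (a + 2*π) ^ (d-1) * (2*α) := by rw [← hcmul]; ring
    rw [abs_sub_le_iff]
    constructor <;> nlinarith [hmono, hα0, hαπ]
  -- inductive bound on whole periods
  have ind : ∀ n : ℕ,
      |(∫ r in (0:ℝ)..(2*π*n), r ^ (d-1) * chi γ u r)
        - c * ∫ r in (0:ℝ)..(2*π*n), r ^ (d-1)| ≤ 2*π*(2*π*n)^(d-1) := by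
    intro n
    induction n with
    | zero => simp [pow_nonneg, hπ.le, mul_nonneg, pow_nonneg (mul_nonneg (by linarith) hπ.le)]
    | succ n ih =>
      have hsplit1 : ∫ r in (0:ℝ)..(2*π*(n+1):ℝ), r ^ (d-1) * chi γ u r
          = (∫ r in (0:ℝ)..(2*π*n), r ^ (d-1) * chi γ u r)
            + ∫ r in (2*π*n : ℝ)..((2*π*n : ℝ) + 2*π), r ^ (d-1) * chi γ u r := by
        rw [intervalIntegral.integral_add_adjacent_intervals
          (intervalIntegrable_pow_chi γ u _ _ _) (intervalIntegrable_pow_chi γ u _ _ _)]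
        congr 1
        push_cast
        ring
      have hsplit2 : ∫ r in (0:ℝ)..(2*π*(n+1):ℝ), r ^ (d-1)
          = (∫ r in (0:ℝ)..(2*π*n), r ^ (d-1))
            + ∫ r in (2*π*n : ℝ)..((2*π*n : ℝ) + 2*π), r ^ (d-1) := by
        rw [intervalIntegral.integral_add_adjacent_intervals
          (intervalIntegrable_pow _) (intervalIntegrable_pow _)]
        congr 1
        push_cast
        ring
      have hstep := step (2*π*n) (by positivity)
      have hgoal : (2*π*((n:ℝ)+1)) = (2*π*n) + 2*π := by ring
      push_cast
      rw [hsplit1, hsplit2, hgoal]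
      calc |(∫ r in (0:ℝ)..(2*π*n), r ^ (d-1) * chi γ u r)
            + (∫ r in (2*π*n : ℝ)..((2*π*n : ℝ) + 2*π), r ^ (d-1) * chi γ u r)
            - c * ((∫ r in (0:ℝ)..(2*π*n), r ^ (d-1))
              + ∫ r in (2*π*n : ℝ)..((2*π*n : ℝ) + 2*π), r ^ (d-1))|
          = |(∫ r in (0:ℝ)..(2*π*n), r ^ (d-1) * chi γ u r)
            + (∫ r in (2*π*n : ℝ)..((2*π*n : ℝ) + 2*π), r ^ (d-1) * chi γ u r)
            - (c * (∫ r in (0:ℝ)..(2*π*n), r ^ (d-1))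
              + c * ∫ r in (2*π*n : ℝ)..((2*π*n : ℝ) + 2*π), r ^ (d-1))| := by
            congr 1; ring
        _ ≤ |(∫ r in (0:ℝ)..(2*π*n), r ^ (d-1) * chi γ u r)
              - c * ∫ r in (0:ℝ)..(2*π*n), r ^ (d-1)|
            + |(∫ r in (2*π*n : ℝ)..((2*π*n : ℝ) + 2*π), r ^ (d-1) * chi γ u r)
              - c * ∫ r in (2*π*n : ℝ)..((2*π*n : ℝ) + 2*π), r ^ (d-1)| := abs_split _ _ _ _
        _ ≤ 2*π*(2*π*n)^(d-1) + 2*π*(((2*π*n) + 2*π)^(d-1) - (2*π*n)^(d-1)) :=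
            add_le_add ih hstep
        _ = 2*π*((2*π*n + 2*π))^(d-1) := by ring
  -- conclusion
  set n : ℕ := ⌊R / (2*π)⌋₊ with hn
  have h2π : (0:ℝ) < 2*π := by linarith
  have hnle : 2*π*n ≤ R := by
    have := Nat.floor_le (a := R / (2*π)) (by positivity)
    calc 2*π*(n:ℝ) ≤ 2*π*(R/(2*π)) := by
          apply mul_le_mul_of_nonneg_left _ h2π.le
          exact this
      _ = R := by field_simp
  have hnlt : R < 2*π*n + 2*π := by
    have := Nat.lt_floor_add_one (R / (2*π))
    calc R = 2*π*(R/(2*π)) := by field_simp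
      _ < 2*π*((n:ℝ)+1) := by
          apply mul_lt_mul_of_pos_left _ h2π
          exact this
      _ = 2*π*n + 2*π := by ring
  have hsplit1 : ∫ r in (0:ℝ)..R, r ^ (d-1) * chi γ u r
      = (∫ r in (0:ℝ)..(2*π*n), r ^ (d-1) * chi γ u r)
        + ∫ r in (2*π*n : ℝ)..R, r ^ (d-1) * chi γ u r := by
    rw [intervalIntegral.integral_add_adjacent_intervals
      (intervalIntegrable_pow_chi γ u _ _ _) (intervalIntegrable_pow_chi γ u _ _ _)]
  have hsplit2 : ∫ r in (0:ℝ)..R, r ^ (d-1)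
      = (∫ r in (0:ℝ)..(2*π*n), r ^ (d-1)) + ∫ r in (2*π*n : ℝ)..R, r ^ (d-1) := by
    rw [intervalIntegral.integral_add_adjacent_intervals
      (intervalIntegrable_pow _) (intervalIntegrable_pow _)]
  -- tail bounds
  have hRpow : ∀ x ∈ Set.Icc (2*π*(n:ℝ)) R, x ^ (d-1) ≤ R ^ (d-1) := by
    intro x hx
    exact pow_le_pow_left₀ (le_trans (by positivity) hx.1) hx.2 _
  have htail1lo : 0 ≤ ∫ r in (2*π*n : ℝ)..R, r ^ (d-1) * chi γ u r :=
    intervalIntegral.integral_nonneg hnle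
      (fun x hx => mul_nonneg (pow_nonneg (le_trans (by positivity) hx.1) _) (chi_nonneg γ u x))
  have htail1hi : (∫ r in (2*π*n : ℝ)..R, r ^ (d-1) * chi γ u r) ≤ R ^ (d-1) * (R - 2*π*n) := by
    calc (∫ r in (2*π*n : ℝ)..R, r ^ (d-1) * chi γ u r)
        ≤ ∫ _r in (2*π*n : ℝ)..R, R ^ (d-1) := by
          apply intervalIntegral.integral_mono_on hnle (intervalIntegrable_pow_chi γ u _ _ _)
            (intervalIntegrable_const)
          intro x hx
          calc x ^ (d-1) * chi γ u x ≤ x ^ (d-1) * 1 :=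
                mul_le_mul_of_nonneg_left (chi_le_one γ u x)
                  (pow_nonneg (le_trans (by positivity) hx.1) _)
            _ = x ^ (d-1) := by ring
            _ ≤ R ^ (d-1) := hRpow x hx
      _ = R ^ (d-1) * (R - 2*π*n) := by rw [intervalIntegral.integral_const, smul_eq_mul]; ring
  have htail2lo : 0 ≤ ∫ r in (2*π*n : ℝ)..R, r ^ (d-1) :=
    intervalIntegral.integral_nonneg hnle
      (fun x hx => pow_nonneg (le_trans (by positivity) hx.1) _)
  have htail2hi : (∫ r in (2*π*n : ℝ)..R, r ^ (d-1)) ≤ R ^ (d-1) * (R - 2*π*n) := by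
    calc (∫ r in (2*π*n : ℝ)..R, r ^ (d-1)) ≤ ∫ _r in (2*π*n : ℝ)..R, R ^ (d-1) := by
          apply intervalIntegral.integral_mono_on hnle (intervalIntegrable_pow _)
            (intervalIntegrable_const)
          exact hRpow
      _ = R ^ (d-1) * (R - 2*π*n) := by rw [intervalIntegral.integral_const, smul_eq_mul]; ring
  have hRd : (0:ℝ) ≤ R ^ (d-1) := pow_nonneg hR _
  have hindR : |(∫ r in (0:ℝ)..(2*π*n), r ^ (d-1) * chi γ u r)
      - c * ∫ r in (0:ℝ)..(2*π*n), r ^ (d-1)| ≤ 2*π*R^(d-1) := by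
    refine le_trans (ind n) ?_
    exact mul_le_mul_of_nonneg_left (pow_le_pow_left₀ (by positivity) hnle _) h2π.le
  have htail : |(∫ r in (2*π*n : ℝ)..R, r ^ (d-1) * chi γ u r)
      - c * ∫ r in (2*π*n : ℝ)..R, r ^ (d-1)| ≤ 2*π*R^(d-1) := by
    have hcT : 0 ≤ c * ∫ r in (2*π*n : ℝ)..R, r ^ (d-1) := mul_nonneg hc0 htail2lo
    have hcT2 : c * (∫ r in (2*π*n : ℝ)..R, r ^ (d-1)) ≤ R ^ (d-1) * (R - 2*π*n) := by
      calc c * (∫ r in (2*π*n : ℝ)..R, r ^ (d-1)) ≤ 1 * (R ^ (d-1) * (R - 2*π*n)) := by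
            apply mul_le_mul hc1 htail2hi htail2lo zero_le_one
        _ = R ^ (d-1) * (R - 2*π*n) := by ring
    have hM : R ^ (d-1) * (R - 2*π*n) ≤ 2*π*R^(d-1) := by nlinarith
    rw [abs_sub_le_iff]
    constructor <;> linarith
  rw [hsplit1, hsplit2, mul_add]
  calc |(∫ r in (0:ℝ)..(2*π*n), r ^ (d-1) * chi γ u r)
        + (∫ r in (2*π*n : ℝ)..R, r ^ (d-1) * chi γ u r)
        - (c * (∫ r in (0:ℝ)..(2*π*n), r ^ (d-1)) + c * ∫ r in (2*π*n : ℝ)..R, r ^ (d-1))|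
      ≤ |(∫ r in (0:ℝ)..(2*π*n), r ^ (d-1) * chi γ u r)
          - c * ∫ r in (0:ℝ)..(2*π*n), r ^ (d-1)|
        + |(∫ r in (2*π*n : ℝ)..R, r ^ (d-1) * chi γ u r)
          - c * ∫ r in (2*π*n : ℝ)..R, r ^ (d-1)| := abs_split _ _ _ _
    _ ≤ 2*π*R^(d-1) + 2*π*R^(d-1) := add_le_add hindR htail
    _ = 4*π*R^(d-1) := by ring

lemma F_eq (d : ℕ) (hd : 1 ≤ d) (γ u R : ℝ) (hR : 0 < R) :
    (volume (Metric.ball (0 : EuclideanSpace ℝ (Fin d)) R)).toReal⁻¹ *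
        (∫ a in Metric.ball (0 : EuclideanSpace ℝ (Fin d)) R,
          (if 0 ≤ Real.cos (‖a‖ + γ) - u then (1 : ℝ) else -1))
      = 2 * d * (∫ r in (0:ℝ)..R, r ^ (d-1) * chi γ u r) / R ^ d - 1 := by
  classical
  haveI : NeZero d := ⟨by omega⟩
  haveI : Nontrivial (EuclideanSpace ℝ (Fin d)) := inferInstance
  have hdim : Module.finrank ℝ (EuclideanSpace ℝ (Fin d)) = d := finrank_euclideanSpace_fin
  set V := (volume (Metric.ball (0 : EuclideanSpace ℝ (Fin d)) 1)).toReal with hV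
  have hV0 : 0 < V :=
    ENNReal.toReal_pos (Metric.measure_ball_pos volume 0 one_pos).ne' measure_ball_lt_top.ne
  have hvol : (volume (Metric.ball (0 : EuclideanSpace ℝ (Fin d)) R)).toReal = R ^ d * V := by
    rw [Measure.addHaar_ball (μ := volume) (x := (0 : EuclideanSpace ℝ (Fin d))) hR.le, ENNReal.toReal_mul,
      ENNReal.toReal_ofReal (by positivity), hdim]
  have hiv : ∀ a : EuclideanSpace ℝ (Fin d),
      (if 0 ≤ Real.cos (‖a‖ + γ) - u then (1:ℝ) else -1) = 2 * chi γ u ‖a‖ - 1 := by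
    intro a; unfold chi; split <;> norm_num
  have hmeas : AEStronglyMeasurable (fun a : EuclideanSpace ℝ (Fin d) => chi γ u ‖a‖) volume :=
    ((measurable_chi γ u).comp measurable_norm).aestronglyMeasurable
  have hint : IntegrableOn (fun a : EuclideanSpace ℝ (Fin d) => chi γ u ‖a‖)
      (Metric.ball 0 R) volume :=
    Measure.integrableOn_of_bounded measure_ball_lt_top.ne hmeas
      (Filter.Eventually.of_forall fun a => by
        rw [Real.norm_eq_abs, abs_of_nonneg (chi_nonneg _ _ _)]; exact chi_le_one _ _ _)
  have hsplit : (∫ a in Metric.ball (0 : EuclideanSpace ℝ (Fin d)) R,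
        (if 0 ≤ Real.cos (‖a‖ + γ) - u then (1:ℝ) else -1))
      = 2 * (∫ a in Metric.ball (0 : EuclideanSpace ℝ (Fin d)) R, chi γ u ‖a‖)
        - (volume (Metric.ball (0 : EuclideanSpace ℝ (Fin d)) R)).toReal := by
    simp_rw [hiv]
    rw [MeasureTheory.integral_sub (hint.const_mul 2)
      (integrableOn_const measure_ball_lt_top.ne)]
    rw [MeasureTheory.integral_const_mul, setIntegral_const]
    simp [smul_eq_mul, measureReal_def]
  have hpolar : (∫ a in Metric.ball (0 : EuclideanSpace ℝ (Fin d)) R, chi γ u ‖a‖)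
      = d * (V * ∫ r in (0:ℝ)..R, r ^ (d-1) * chi γ u r) := by
    have h1 : (∫ a in Metric.ball (0 : EuclideanSpace ℝ (Fin d)) R, chi γ u ‖a‖)
        = ∫ a : EuclideanSpace ℝ (Fin d), (Set.indicator (Set.Iio R) (chi γ u)) ‖a‖ := by
      rw [← MeasureTheory.integral_indicator measurableSet_ball]
      congr 1
      ext a
      simp only [Set.indicator_apply, Metric.mem_ball, dist_zero_right, Set.mem_Iio]
    rw [h1, MeasureTheory.integral_fun_norm_addHaar volume (Set.indicator (Set.Iio R) (chi γ u)),
      hdim, nsmul_eq_mul, smul_eq_mul, measureReal_def, ← hV]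
    congr 2
    have h2 : ∀ y : ℝ, y ^ (d-1) • (Set.indicator (Set.Iio R) (chi γ u)) y
        = Set.indicator (Set.Iio R) (fun y => y ^ (d-1) * chi γ u y) y := by
      intro y
      simp only [Set.indicator_apply]
      split <;> simp
    simp_rw [h2]
    rw [setIntegral_indicator measurableSet_Iio,
      show Set.Ioi (0:ℝ) ∩ Set.Iio R = Set.Ioo 0 R from Set.Ioi_inter_Iio,
      ← integral_Ioc_eq_integral_Ioo, ← intervalIntegral.integral_of_le hR.le]
  rw [hsplit, hpolar, hvol]
  have hRd : (0:ℝ) < R ^ d := by positivity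
  field_simp

lemma F_bound (d : ℕ) (hd : 1 ≤ d) (γ : ℝ) {u : ℝ} (hu : u ∈ Set.Icc (-1:ℝ) 1)
    {R : ℝ} (hR : 0 < R) :
    |(volume (Metric.ball (0 : EuclideanSpace ℝ (Fin d)) R)).toReal⁻¹ *
        (∫ a in Metric.ball (0 : EuclideanSpace ℝ (Fin d)) R,
          (if 0 ≤ Real.cos (‖a‖ + γ) - u then (1 : ℝ) else -1))
      - (2 * Real.arccos u / π - 1)| ≤ 8 * π * d / R := by
  rw [F_eq d hd γ u R hR]
  have hπ : (0:ℝ) < π := Real.pi_pos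
  have hpow : ∫ r in (0:ℝ)..R, r ^ (d-1) = R ^ d / d := by
    have h1 : ((d-1:ℕ):ℝ) + 1 = d := by
      exact_mod_cast congrArg (Nat.cast (R := ℝ)) (Nat.sub_add_cancel hd)
    rw [integral_pow, Nat.sub_add_cancel hd, zero_pow (by omega : d ≠ 0), h1]
    ring
  have hkey := integral_pow_chi_bound γ hu hd hR.le
  have hRd : (0:ℝ) < R ^ d := by positivity
  have hd0 : (0:ℝ) < d := by exact_mod_cast hd
  have heq : 2 * (d:ℝ) * (∫ r in (0:ℝ)..R, r ^ (d-1) * chi γ u r) / R ^ d - 1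
      - (2 * Real.arccos u / π - 1)
      = (2 * d / R ^ d) * ((∫ r in (0:ℝ)..R, r ^ (d-1) * chi γ u r)
        - (Real.arccos u / π) * ∫ r in (0:ℝ)..R, r ^ (d-1)) := by
    rw [hpow]
    field_simp
    ring
  rw [heq, abs_mul, abs_of_nonneg (by positivity : (0:ℝ) ≤ 2 * d / R ^ d)]
  have hRdpow : R ^ (d-1) = R ^ d / R := by
    rw [eq_div_iff hR.ne', ← pow_succ, Nat.sub_add_cancel hd]
  calc 2 * (d:ℝ) / R ^ d * |(∫ r in (0:ℝ)..R, r ^ (d-1) * chi γ u r)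
        - (Real.arccos u / π) * ∫ r in (0:ℝ)..R, r ^ (d-1)|
      ≤ 2 * d / R ^ d * (4 * π * R ^ (d-1)) :=
        mul_le_mul_of_nonneg_left hkey (by positivity)
    _ = 8 * π * d / R := by rw [hRdpow]; field_simp; ring

/-- For `p(a) = cos(‖a‖ + γ)` on `ℝᵈ` and `u ∈ (-1,1)`, the volume-average of
`sgn(p(a) - u)` over `B_R(0)` converges, as `R → ∞`, to `2 arccos(u)/π - 1`, uniformly in
`u` on compact subsets of `(-1,1)`; in particular the limit is `0` at `u = 0`. -/
theorem stmt16 (d : ℕ) (hd : 1 ≤ d) (γ : ℝ) :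
    let F : ℝ → ℝ → ℝ := fun R u =>
      (volume (Metric.ball (0 : EuclideanSpace ℝ (Fin d)) R)).toReal⁻¹ *
        ∫ a in Metric.ball (0 : EuclideanSpace ℝ (Fin d)) R,
          (if 0 ≤ Real.cos (‖a‖ + γ) - u then (1 : ℝ) else -1)
    (∀ K : Set ℝ, IsCompact K → K ⊆ Set.Ioo (-1 : ℝ) 1 →
      TendstoUniformlyOn F (fun u => 2 * Real.arccos u / Real.pi - 1) Filter.atTop K) ∧
    2 * Real.arccos 0 / Real.pi - 1 = 0 := by
  intro F
  have hF : ∀ R u, F R u = (volume (Metric.ball (0 : EuclideanSpace ℝ (Fin d)) R)).toReal⁻¹ *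
      ∫ a in Metric.ball (0 : EuclideanSpace ℝ (Fin d)) R,
        (if 0 ≤ Real.cos (‖a‖ + γ) - u then (1 : ℝ) else -1) := fun _ _ => rfl
  constructor
  · intro K hK hKsub
    rw [Metric.tendstoUniformlyOn_iff]
    intro ε hε
    filter_upwards [Filter.eventually_ge_atTop (max 1 (8 * π * d / ε + 1))] with R hR u hu
    have hR1 : (1:ℝ) ≤ R := le_trans (le_max_left _ _) hR
    have hR0 : (0:ℝ) < R := lt_of_lt_of_le one_pos hR1
    have hb := F_bound d hd γ (u := u)
      (Set.mem_Icc.2 ⟨(hKsub hu).1.le, (hKsub hu).2.le⟩) hR0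
    rw [Real.dist_eq, hF]
    have h3 : 8 * π * d / ε + 1 ≤ R := le_trans (le_max_right _ _) hR
    have h2 : 8 * π * d / R < ε := by
      have hmul : ε * (8 * π * (d:ℝ) / ε + 1) ≤ ε * R := mul_le_mul_of_nonneg_left h3 hε.le
      have hid : ε * (8 * π * (d:ℝ) / ε + 1) = 8 * π * d + ε := by field_simp
      rw [div_lt_iff₀ hR0]
      nlinarith [Real.pi_pos, (by exact_mod_cast hd : (1:ℝ) ≤ d)]
    calc |(2 * Real.arccos u / π - 1)
          - ((volume (Metric.ball (0 : EuclideanSpace ℝ (Fin d)) R)).toReal⁻¹ *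
            ∫ a in Metric.ball (0 : EuclideanSpace ℝ (Fin d)) R,
              (if 0 ≤ Real.cos (‖a‖ + γ) - u then (1 : ℝ) else -1))|
        = |(volume (Metric.ball (0 : EuclideanSpace ℝ (Fin d)) R)).toReal⁻¹ *
            (∫ a in Metric.ball (0 : EuclideanSpace ℝ (Fin d)) R,
              (if 0 ≤ Real.cos (‖a‖ + γ) - u then (1 : ℝ) else -1))
            - (2 * Real.arccos u / π - 1)| := abs_sub_comm _ _
      _ ≤ 8 * π * d / R := hb
      _ < ε := h2
  · rw [Real.arccos_zero]
    field_simp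
    norm_num
end
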